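/- Let T be quasi-nonexpansive with fixed point x* on a real Hilbert space, T̂ = (1−η)Id + ηT with η ∈ (0,1], f differentiable, β > 0, α ∈ [0,1], and x⁺ = α(x − β∇f(x)) + (1−α)T̂(x). Then with C(y) := (1/2)‖y − x*‖², the inequality C(x⁺) − C(x) ≤ (1/2)‖x⁺ − x‖² − α⟨β∇f(x), x − x*⟩ − (η/2)(1−α)‖x − T(x)‖² holds. -/

import Mathlib

/-- One-step Lyapunov inequality: with C(y) = ½‖y − x*‖² and
x⁺ = α(x − β∇f(x)) + (1−α)T̂(x), T̂ = (1−η)Id + ηT,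
C(x⁺) − C(x) ≤ ½‖x⁺ − x‖² − α⟨β∇f(x), x − x*⟩ − (η/2)(1−α)‖x − T(x)‖². -/
theorem one_step_lyapunov_ineq
    {H : Type*} [NormedAddCommGroup H] [InnerProductSpace ℝ H]
    (T : H → H) (xstar : H) (hfix : T xstar = xstar)
    (hquasi : ∀ y, ‖T y - xstar‖ ≤ ‖y - xstar‖)
    (f : H → ℝ) (f' : H → H)
    (β η α : ℝ) (hβ : 0 < β) (hη : η ∈ Set.Ioc (0 : ℝ) 1)
    (hα : α ∈ Set.Icc (0 : ℝ) 1)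
    (x xplus : H)
    (hx : xplus = α • (x - β • f' x) + (1 - α) • ((1 - η) • x + η • T x)) :
    (1 / 2) * ‖xplus - xstar‖ ^ 2 - (1 / 2) * ‖x - xstar‖ ^ 2 ≤
      (1 / 2) * ‖xplus - x‖ ^ 2 - α * inner ℝ (β • f' x) (x - xstar) -
        (η / 2) * (1 - α) * ‖x - T x‖ ^ 2 := by
  obtain ⟨hη0, hη1⟩ := hη
  obtain ⟨hα0, hα1⟩ := hα
  have key : (1/2) * ‖x - T x‖^2 ≤ inner ℝ (x - T x) (x - xstar) := by
    have h1 : ‖T x - xstar‖^2 ≤ ‖x - xstar‖^2 := by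
      nlinarith [hquasi x, norm_nonneg (T x - xstar), norm_nonneg (x - xstar)]
    have h2 : ‖(x - xstar) - (x - T x)‖^2
        = ‖x - xstar‖^2 - 2 * inner ℝ (x - xstar) (x - T x) + ‖x - T x‖^2 :=
      norm_sub_sq_real _ _
    have h3 : (x - xstar) - (x - T x) = T x - xstar := by abel
    rw [h3] at h2
    have h4 := real_inner_comm (x - xstar) (x - T x)
    linarith
  have hdiff : xplus - x = (-(α * β)) • f' x + ((1 - α) * η) • (T x - x) := by
    rw [hx]; module
  have hexp : (1/2) * ‖xplus - xstar‖^2 - (1/2) * ‖x - xstar‖^2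
      = (1/2) * ‖xplus - x‖^2 + inner ℝ (xplus - x) (x - xstar) := by
    have h := norm_add_sq_real (xplus - x) (x - xstar)
    have h' : (xplus - x) + (x - xstar) = xplus - xstar := by abel
    rw [h'] at h
    linarith
  have hinner : (inner ℝ (xplus - x) (x - xstar) : ℝ)
      = -(α * inner ℝ (β • f' x) (x - xstar))
        - (1 - α) * η * inner ℝ (x - T x) (x - xstar) := by
    rw [hdiff]
    have e1 : (T x - x) = -(x - T x) := by abel
    rw [e1]
    rw [inner_add_left, real_inner_smul_left, real_inner_smul_left,
      inner_neg_left, real_inner_smul_left]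
    ring
  have hmul : (1 - α) * η * ((1/2) * ‖x - T x‖^2)
      ≤ (1 - α) * η * inner ℝ (x - T x) (x - xstar) :=
    mul_le_mul_of_nonneg_left key (mul_nonneg (by linarith) hη0.le)
  rw [hexp, hinner]
  nlinarith [hmul]
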